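/- The linear map from Λ¹⊗Λ² to Λ²⊗Λ¹ sending a tensor K_{abc} with K_{abc}=K_{a[bc]} (skew in its last two indices) to its skew-symmetrisation K_{[ab]c} over the first two indices is a linear isomorphism. -/
import Mathlib


/-- A function `K : V → V → V → ℝ` is trilinear (linear in each argument). -/
def Trilinear {V : Type*} [AddCommGroup V] [Module ℝ V] (K : V → V → V → ℝ) : Prop :=
  (∀ a a' b c, K (a + a') b c = K a b c + K a' b c) ∧
  (∀ (r : ℝ) a b c, K (r • a) b c = r * K a b c) ∧
  (∀ a b b' c, K a (b + b') c = K a b c + K a b' c) ∧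
  (∀ (r : ℝ) a b c, K a (r • b) c = r * K a b c) ∧
  (∀ a b c c', K a b (c + c') = K a b c + K a b c') ∧
  (∀ (r : ℝ) a b c, K a b (r • c) = r * K a b c)

/-- The linear map `Λ¹⊗Λ² → Λ²⊗Λ¹`, sending a trilinear form `K` skew in its last
two arguments to its skew-symmetrisation `K_{[ab]c}` over the first two arguments,
is a linear isomorphism: it maps into the trilinear forms skew in the first two
arguments, and every such form has a unique preimage. -/
theorem stmt0 {V : Type*} [AddCommGroup V] [Module ℝ V] [FiniteDimensional ℝ V] :
    (∀ K : V → V → V → ℝ, Trilinear K → (∀ a b c, K a b c = - K a c b) →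
      (Trilinear (fun a b c => (K a b c - K b a c) / 2) ∧
        ∀ a b c, (K a b c - K b a c) / 2 = - ((K b a c - K a b c) / 2))) ∧
    (∀ L : V → V → V → ℝ, Trilinear L → (∀ a b c, L a b c = - L b a c) →
      ∃! K : V → V → V → ℝ,
        (Trilinear K ∧ (∀ a b c, K a b c = - K a c b)) ∧
        (fun a b c => (K a b c - K b a c) / 2) = L) := by
  constructor
  · rintro K ⟨h1, h2, h3, h4, h5, h6⟩ _
    refine ⟨⟨?_, ?_, ?_, ?_, ?_, ?_⟩, ?_⟩
    · intro a a' b c; simp only [h1, h3]; ring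
    · intro r a b c; simp only [h2, h4]; ring
    · intro a b b' c; simp only [h1, h3]; ring
    · intro r a b c; simp only [h2, h4]; ring
    · intro a b c c'; simp only [h5]; ring
    · intro r a b c; simp only [h6]; ring
    · intro a b c; ring
  · rintro L ⟨h1, h2, h3, h4, h5, h6⟩ hsk
    refine ⟨fun a b c => L a b c - L b c a + L c a b, ⟨⟨⟨?_, ?_, ?_, ?_, ?_, ?_⟩, ?_⟩, ?_⟩, ?_⟩
    · intro a a' b c; simp only [h1, h3, h5]; ring
    · intro r a b c; simp only [h2, h4, h6]; ring
    · intro a b b' c; simp only [h1, h3, h5]; ring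
    · intro r a b c; simp only [h2, h4, h6]; ring
    · intro a b c c'; simp only [h1, h3, h5]; ring
    · intro r a b c; simp only [h2, h4, h6]; ring
    · intro a b c
      show L a b c - L b c a + L c a b = -(L a c b - L c b a + L b a c)
      have e1 := hsk a c b   -- L a c b = - L c a b
      have e2 := hsk b c a   -- L b c a = - L c b a
      have e3 := hsk b a c   -- L b a c = - L a b c
      linarith
    · funext a b c
      show (L a b c - L b c a + L c a b - (L b a c - L a c b + L c b a)) / 2 = L a b c
      have e1 := hsk b a c
      have e2 := hsk a c b
      have e3 := hsk c b a
      linarith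
    · rintro f ⟨⟨_, fsk⟩, hf⟩
      funext a b c
      show f a b c = L a b c - L b c a + L c a b
      have key : ∀ x y z, (f x y z - f y x z) / 2 = L x y z := fun x y z => by
        simpa using congrFun (congrFun (congrFun hf x) y) z
      have k1 := key a b c
      have k2 := key b c a
      have k3 := key c a b
      have s1 := fsk a b c
      have s2 := fsk b a c
      have s3 := fsk c b a
      have s4 := fsk a c b
      linarith
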